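/- Let $a\in(-1,1)$ and let $\widetilde u(x,y,t)$ be the degenerate heat kernel defined via the series in terms of $\nu=(a-1)/2$. Then $\widetilde u(x,y,t)\ge 0$ for all $x,y\in\mathbb{R}$ and $t>0$. -/

import Mathlib

noncomputable section
open Real Filter Topology Set

/-- The Bessel-type profile `F(z)` with `ν = (a-1)/2`:
`F(z) = e^{-z/2} ( ∑_k (z/4)^{2k}/(k! Γ(k+ν+1)) + (z/4)|z/4|^{-a} ∑_k (z/4)^{2k}/(k! Γ(k-ν+1)) )`. -/
def Fker (a z : ℝ) : ℝ :=
  Real.exp (-z / 2) *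
    ((∑' k : ℕ, (z / 4) ^ (2 * k) / ((Nat.factorial k : ℝ) * Real.Gamma ((k : ℝ) + (a - 1) / 2 + 1))) +
      z / 4 * |z / 4| ^ (-a) *
        ∑' k : ℕ, (z / 4) ^ (2 * k) / ((Nat.factorial k : ℝ) * Real.Gamma ((k : ℝ) - (a - 1) / 2 + 1)))

/-- The one-dimensional degenerate heat kernel
`ũ(x,y,t) = (4t)^{-(a+1)/2} e^{-(x-y)²/(4t)} F(xy/t)`. -/
def utilde (a x y t : ℝ) : ℝ :=
  (4 * t) ^ (-(a + 1) / 2) * Real.exp (-(x - y) ^ 2 / (4 * t)) * Fker a (x * y / t)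

namespace DegHeatAux

def tt (b c : ℝ) (k : ℕ) : ℝ := c ^ (2 * k) / (k.factorial * Real.Gamma (k + b + 1))

def td (b c : ℝ) (k : ℕ) : ℝ :=
  ((2 * k : ℕ) : ℝ) * c ^ (2 * k - 1) / (k.factorial * Real.Gamma (k + b + 1))

def tdd (b c : ℝ) (k : ℕ) : ℝ :=
  ((2 * k : ℕ) : ℝ) * ((2 * k - 1 : ℕ) : ℝ) * c ^ (2 * k - 2) /
    (k.factorial * Real.Gamma (k + b + 1))

def S (b c : ℝ) : ℝ := ∑' k, tt b c k
def S1 (b c : ℝ) : ℝ := ∑' k, td b c k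
def S2 (b c : ℝ) : ℝ := ∑' k, tdd b c k

variable {b : ℝ}

lemma Gam_arg_pos (hb : -1 < b) (k : ℕ) : 0 < (k : ℝ) + b + 1 := by
  have : (0:ℝ) ≤ k := Nat.cast_nonneg k
  linarith

lemma Gam_pos (hb : -1 < b) (k : ℕ) : 0 < Real.Gamma ((k : ℝ) + b + 1) :=
  Real.Gamma_pos_of_pos (Gam_arg_pos hb k)

lemma Gam_succ (hb : -1 < b) (k : ℕ) :
    Real.Gamma (((k+1 : ℕ) : ℝ) + b + 1) = ((k : ℝ) + b + 1) * Real.Gamma ((k : ℝ) + b + 1) := by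
  have h : ((k+1 : ℕ) : ℝ) + b + 1 = ((k : ℝ) + b + 1) + 1 := by push_cast; ring
  rw [h, Real.Gamma_add_one (ne_of_gt (Gam_arg_pos hb k))]

lemma summable_master (hb : -1 < b) (m : ℕ) {x : ℝ} (hx : 0 ≤ x) :
    Summable (fun k : ℕ => (k : ℝ) ^ m * x ^ k / (k.factorial * Real.Gamma (k + b + 1))) := by
  set f : ℕ → ℝ := fun k => (k : ℝ) ^ m * x ^ k / (k.factorial * Real.Gamma (k + b + 1)) with hf
  have hDpos : ∀ k : ℕ, (0:ℝ) < k.factorial * Real.Gamma (k + b + 1) := fun k => by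
    have := Gam_pos hb k
    positivity
  have hfnn : ∀ k, 0 ≤ f k := fun k => by
    apply div_nonneg _ (hDpos k).le
    positivity
  apply summable_of_ratio_norm_eventually_le (r := 1/2) (by norm_num)
  have hK : ∀ᶠ k : ℕ in atTop, (1:ℝ) ≤ k ∧ (2:ℝ)^(m+1) * x ≤ k := by
    filter_upwards [eventually_ge_atTop (max 1 ⌈(2:ℝ)^(m+1) * x⌉₊)] with k hk
    have h1 : (1:ℕ) ≤ k := le_trans (le_max_left _ _) hk
    have h2 : ⌈(2:ℝ)^(m+1) * x⌉₊ ≤ k := le_trans (le_max_right _ _) hk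
    constructor
    · exact_mod_cast h1
    · calc (2:ℝ)^(m+1) * x ≤ ⌈(2:ℝ)^(m+1) * x⌉₊ := Nat.le_ceil _
        _ ≤ k := by exact_mod_cast h2
  filter_upwards [hK] with k hk
  obtain ⟨hk1, hk2⟩ := hk
  rw [Real.norm_of_nonneg (hfnn _), Real.norm_of_nonneg (hfnn _)]
  have scalar : ((k:ℝ)+1)^m * x * 2 ≤ (k:ℝ)^m * (((k:ℝ)+1)*((k:ℝ)+b+1)) := by
    have h1 : ((k:ℝ)+1)^m ≤ (2*k)^m := by
      apply pow_le_pow_left₀ (by linarith) (by linarith)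
    have h2 : ((2:ℝ)*k)^m = 2^m * (k:ℝ)^m := by rw [mul_pow]
    have h3 : ((k:ℝ)+1)^m * x * 2 ≤ 2^m * (k:ℝ)^m * x * 2 := by
      have := mul_le_mul_of_nonneg_right (h1.trans_eq h2) hx
      nlinarith [this]
    have h4 : (2:ℝ)^m * (k:ℝ)^m * x * 2 = (k:ℝ)^m * ((2:ℝ)^(m+1) * x) := by ring
    have h5 : (k:ℝ)^m * ((2:ℝ)^(m+1) * x) ≤ (k:ℝ)^m * (((k:ℝ)+1)*((k:ℝ)+b+1)) := by
      apply mul_le_mul_of_nonneg_left _ (by positivity)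
      calc (2:ℝ)^(m+1) * x ≤ (k:ℝ) := hk2
        _ ≤ ((k:ℝ)+1)*((k:ℝ)+b+1) := by nlinarith
    linarith
  -- now the fraction inequality
  show ((k+1:ℕ):ℝ)^m * x^(k+1) / ((k+1).factorial * Real.Gamma ((k+1:ℕ) + b + 1)) ≤
    1/2 * ((k:ℝ)^m * x^k / (k.factorial * Real.Gamma (k + b + 1)))
  rw [mul_div_assoc' (1/2), div_le_div_iff₀ (hDpos (k+1)) (hDpos k), Gam_succ hb k,
    Nat.factorial_succ]
  have hD := hDpos k
  have hG := Gam_pos hb k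
  push_cast
  calc ((k:ℝ)+1)^m * x^(k+1) * ((k.factorial:ℝ) * Real.Gamma (k + b + 1))
      = (((k:ℝ)+1)^m * x * 2) * (x^k * k.factorial * Real.Gamma (k+b+1)) * (1/2) := by ring
    _ ≤ ((k:ℝ)^m * (((k:ℝ)+1)*((k:ℝ)+b+1))) * (x^k * k.factorial * Real.Gamma (k+b+1)) * (1/2) := by
        apply mul_le_mul_of_nonneg_right _ (by norm_num)
        apply mul_le_mul_of_nonneg_right scalar
        positivity
    _ = 1/2 * ((k:ℝ)^m * x^k) * (((k:ℝ)+1) * (k.factorial:ℝ) * (((k:ℝ)+b+1) * Real.Gamma (k+b+1))) := by ring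

lemma tt_nonneg (hb : -1 < b) (c : ℝ) (k : ℕ) : 0 ≤ tt b c k := by
  have h1 : (0:ℝ) ≤ c ^ (2 * k) := by rw [pow_mul]; positivity
  have h2 : (0:ℝ) < k.factorial * Real.Gamma (k + b + 1) := by
    have := Gam_pos hb k; positivity
  exact div_nonneg h1 h2.le

lemma summable_tt (hb : -1 < b) (c : ℝ) : Summable (tt b c) := by
  apply (summable_master hb 0 (sq_nonneg c)).congr
  intro k
  simp only [tt, pow_zero, one_mul, pow_mul, sq]

lemma td_bound (hb : -1 < b) {R y : ℝ} (hR : 1 ≤ R) (hy : |y| ≤ R) (k : ℕ) :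
    ‖td b y k‖ ≤ 2 * ((k:ℝ) ^ 1 * (R^2) ^ k / (k.factorial * Real.Gamma (k + b + 1))) := by
  have hD : (0:ℝ) < k.factorial * Real.Gamma (k + b + 1) := by
    have := Gam_pos hb k; positivity
  have h1 : ‖td b y k‖ = ((2*k : ℕ):ℝ) * |y| ^ (2*k-1) / (k.factorial * Real.Gamma (k + b + 1)) := by
    rw [td, norm_div, norm_mul, Real.norm_natCast, norm_pow, Real.norm_eq_abs,
      Real.norm_of_nonneg hD.le]
  have h2 : ((2*k:ℕ):ℝ) * |y|^(2*k-1) ≤ 2 * ((k:ℝ)^1 * (R^2)^k) := by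
    have hyk : |y|^(2*k-1) ≤ R^(2*k-1) := pow_le_pow_left₀ (abs_nonneg y) hy _
    have hRk : R^(2*k-1) ≤ R^(2*k) := pow_le_pow_right₀ hR (by omega)
    calc ((2*k:ℕ):ℝ) * |y|^(2*k-1) ≤ ((2*k:ℕ):ℝ) * R^(2*k) :=
          mul_le_mul_of_nonneg_left (hyk.trans hRk) (by positivity)
      _ = 2*((k:ℝ)^1 * (R^2)^k) := by push_cast; rw [pow_mul]; ring
  rw [h1, show 2 * ((k:ℝ) ^ 1 * (R^2) ^ k / (k.factorial * Real.Gamma (k + b + 1)))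
      = 2 * ((k:ℝ) ^ 1 * (R^2) ^ k) / (k.factorial * Real.Gamma (k + b + 1)) by ring]
  gcongr

lemma summable_td (hb : -1 < b) (c : ℝ) : Summable (td b c) := by
  apply Summable.of_norm_bounded (((summable_master hb 1 (sq_nonneg (|c|+1))).mul_left 2))
  exact fun k => td_bound hb (by linarith [abs_nonneg c]) (by linarith [abs_nonneg c]) k

lemma S_pos (hb : -1 < b) (c : ℝ) : 0 < S b c := by
  apply Summable.tsum_pos (summable_tt hb c) (tt_nonneg hb c) 0
  have : tt b c 0 = 1 / Real.Gamma (b+1) := by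
    simp [tt]
  rw [this]
  have := Gam_pos hb 0
  simp at this
  positivity

lemma S_zero (hb : -1 < b) : S b 0 = 1 / Real.Gamma (b + 1) := by
  rw [S, tsum_eq_single 0]
  · simp [tt]
  · intro k hk
    have : 2 * k ≠ 0 := by omega
    simp [tt, zero_pow this]

lemma tdd_bound (hb : -1 < b) {R y : ℝ} (hR : 1 ≤ R) (hy : |y| ≤ R) (k : ℕ) :
    ‖tdd b y k‖ ≤ 4 * ((k:ℝ) ^ 2 * (R^2) ^ k / (k.factorial * Real.Gamma (k + b + 1))) := by
  have hD : (0:ℝ) < k.factorial * Real.Gamma (k + b + 1) := by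
    have := Gam_pos hb k; positivity
  have h1 : ‖tdd b y k‖ = ((2*k : ℕ):ℝ) * ((2*k-1 : ℕ):ℝ) * |y| ^ (2*k-2) /
      (k.factorial * Real.Gamma (k + b + 1)) := by
    rw [tdd, norm_div, norm_mul, norm_mul, Real.norm_natCast, Real.norm_natCast, norm_pow,
      Real.norm_eq_abs, Real.norm_of_nonneg hD.le]
  have h2 : ((2*k:ℕ):ℝ) * ((2*k-1 : ℕ):ℝ) * |y|^(2*k-2) ≤ 4 * ((k:ℝ)^2 * (R^2) ^ k) := by
    have hyk : |y|^(2*k-2) ≤ R^(2*k-2) := pow_le_pow_left₀ (abs_nonneg y) hy _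
    have hRk : R^(2*k-2) ≤ R^(2*k) := pow_le_pow_right₀ hR (by omega)
    have hc1 : ((2*k-1 : ℕ):ℝ) ≤ 2*(k:ℝ) := by
      have : (2*k-1 : ℕ) ≤ 2*k := by omega
      calc ((2*k-1 : ℕ):ℝ) ≤ ((2*k : ℕ):ℝ) := by exact_mod_cast this
        _ = 2*(k:ℝ) := by push_cast; ring
    calc ((2*k:ℕ):ℝ) * ((2*k-1 : ℕ):ℝ) * |y|^(2*k-2)
        ≤ ((2*k:ℕ):ℝ) * (2*(k:ℝ)) * R^(2*k) := by
          apply mul_le_mul (mul_le_mul_of_nonneg_left hc1 (by positivity))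
            (hyk.trans hRk) (by positivity) (by positivity)
      _ = 4 * ((k:ℝ)^2 * (R^2) ^ k) := by push_cast; rw [pow_mul]; ring
  rw [h1, show 4 * ((k:ℝ) ^ 2 * (R^2) ^ k / (k.factorial * Real.Gamma (k + b + 1)))
      = 4 * ((k:ℝ) ^ 2 * (R^2) ^ k) / (k.factorial * Real.Gamma (k + b + 1)) by ring]
  gcongr

lemma summable_tdd (hb : -1 < b) (c : ℝ) : Summable (tdd b c) := by
  apply Summable.of_norm_bounded (((summable_master hb 2 (sq_nonneg (|c|+1))).mul_left 4))
  exact fun k => tdd_bound hb (by linarith [abs_nonneg c]) (by linarith [abs_nonneg c]) k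

lemma hasDerivAt_S (hb : -1 < b) (c : ℝ) : HasDerivAt (S b) (S1 b c) c := by
  have hR : (1:ℝ) ≤ |c| + 1 := by linarith [abs_nonneg c]
  have hRpos : (0:ℝ) < |c| + 1 := by linarith
  apply hasDerivAt_tsum_of_isPreconnected
    (((summable_master hb 1 (sq_nonneg (|c|+1))).mul_left 2))
    (Metric.isOpen_ball (x := (0:ℝ)) (ε := |c|+1))
    ((convex_ball (0:ℝ) (|c|+1)).isPreconnected)
    (g := fun k z => tt b z k) (g' := fun k y => td b y k) (y₀ := 0) (y := c)
  · intro k y hy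
    have : HasDerivAt (fun z : ℝ => z ^ (2*k)) (((2*k : ℕ):ℝ) * y ^ (2*k-1)) y :=
      hasDerivAt_pow (2*k) y
    exact this.div_const _
  · intro k y hy
    have hyR : |y| ≤ |c| + 1 := by
      have := Metric.mem_ball.mp hy
      rw [Real.dist_eq, sub_zero] at this
      linarith
    exact td_bound hb hR hyR k
  · exact Metric.mem_ball_self hRpos
  · exact summable_tt hb 0
  · simp [Metric.mem_ball, Real.dist_eq]

lemma hasDerivAt_S1 (hb : -1 < b) (c : ℝ) : HasDerivAt (S1 b) (S2 b c) c := by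
  have hR : (1:ℝ) ≤ |c| + 1 := by linarith [abs_nonneg c]
  have hRpos : (0:ℝ) < |c| + 1 := by linarith
  apply hasDerivAt_tsum_of_isPreconnected
    (((summable_master hb 2 (sq_nonneg (|c|+1))).mul_left 4))
    (Metric.isOpen_ball (x := (0:ℝ)) (ε := |c|+1))
    ((convex_ball (0:ℝ) (|c|+1)).isPreconnected)
    (g := fun k z => td b z k) (g' := fun k y => tdd b y k) (y₀ := 0) (y := c)
  · intro k y hy
    have h : HasDerivAt (fun z : ℝ => ((2*k : ℕ):ℝ) * z ^ (2*k-1))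
        (((2*k : ℕ):ℝ) * (((2*k-1 : ℕ):ℝ) * y ^ (2*k-1-1))) y :=
      (hasDerivAt_pow (2*k-1) y).const_mul _
    have h2 := h.div_const (k.factorial * Real.Gamma (k + b + 1))
    have he : ((2*k : ℕ):ℝ) * (((2*k-1 : ℕ):ℝ) * y ^ (2*k-1-1)) /
        (k.factorial * Real.Gamma (k + b + 1)) = tdd b y k := by
      rw [tdd]
      have : 2*k-1-1 = 2*k-2 := by omega
      rw [this]; ring
    rw [he] at h2
    exact h2
  · intro k y hy
    have hyR : |y| ≤ |c| + 1 := by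
      have := Metric.mem_ball.mp hy
      rw [Real.dist_eq, sub_zero] at this
      linarith
    exact tdd_bound hb hR hyR k
  · exact Metric.mem_ball_self hRpos
  · exact summable_td hb 0
  · simp [Metric.mem_ball, Real.dist_eq]

lemma ode_S (hb : -1 < b) (c : ℝ) :
    c^2 * S2 b c + (2*b+1)*c*S1 b c = 4*c^2*S b c := by
  have h1 : c^2 * S2 b c + (2*b+1)*c*S1 b c
      = ∑' k, (c^2 * tdd b c k + (2*b+1)*c * td b c k) := by
    rw [S2, S1, ← tsum_mul_left, ← tsum_mul_left,
      Summable.tsum_add ((summable_tdd hb c).mul_left _) ((summable_td hb c).mul_left _)]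
  have h2 : 4*c^2*S b c = ∑' k, 4*c^2 * tt b c k := by
    rw [S, ← tsum_mul_left]
  rw [h1, h2]
  have hsum : Summable (fun k => c^2 * tdd b c k + (2*b+1)*c * td b c k) :=
    ((summable_tdd hb c).mul_left _).add ((summable_td hb c).mul_left _)
  rw [Summable.tsum_eq_zero_add hsum]
  have h0 : c^2 * tdd b c 0 + (2*b+1)*c * td b c 0 = 0 := by
    simp [tdd, td]
  rw [h0, zero_add]
  apply tsum_congr
  intro k
  have e1 : 2*(k+1)-2 = 2*k := by omega
  have e2 : 2*(k+1)-1 = 2*k+1 := by omega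
  have hfac : ((k+1).factorial : ℝ) = (k+1) * k.factorial := by
    rw [Nat.factorial_succ]; push_cast; ring
  have hG := Gam_succ hb k
  have hGpos := Gam_pos hb k
  have hApos := Gam_arg_pos hb k
  have hfacpos : (0:ℝ) < k.factorial := by exact_mod_cast k.factorial_pos
  rw [tdd, td, tt, e1, e2, hfac, hG]
  push_cast
  have hG0 : Real.Gamma ((k:ℝ) + b + 1) ≠ 0 := ne_of_gt hGpos
  have hA0 : (k:ℝ) + b + 1 ≠ 0 := ne_of_gt hApos
  have hf0 : (k.factorial : ℝ) ≠ 0 := ne_of_gt hfacpos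
  have hk0 : ((k:ℝ) + 1) ≠ 0 := by positivity
  field_simp
  ring

def P (b c : ℝ) : ℝ :=
  (-2*b) * S (-b) c * S b c + c * (S1 (-b) c * S b c - S1 b c * S (-b) c)

def PD (b c : ℝ) : ℝ :=
  ((-2*b) * S1 (-b) c * S b c + ((-2*b) * S (-b) c) * S1 b c) +
    (1 * (S1 (-b) c * S b c - S1 b c * S (-b) c) +
      c * ((S2 (-b) c * S b c + S1 (-b) c * S1 b c) - (S2 b c * S (-b) c + S1 b c * S1 (-b) c)))

lemma hasDerivAt_P (hb1 : -1 < b) (hb2 : b < 1) (c : ℝ) : HasDerivAt (P b) (PD b c) c := by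
  have hb' : -1 < -b := by linarith
  have h1 : HasDerivAt (fun y => (-2*b) * S (-b) y * S b y)
      ((-2*b) * S1 (-b) c * S b c + ((-2*b) * S (-b) c) * S1 b c) c := by
    exact (((hasDerivAt_S hb' c).const_mul (-2*b)).mul (hasDerivAt_S hb1 c))
  have h2 : HasDerivAt (fun y => y * (S1 (-b) y * S b y - S1 b y * S (-b) y))
      (1 * (S1 (-b) c * S b c - S1 b c * S (-b) c) +
        c * ((S2 (-b) c * S b c + S1 (-b) c * S1 b c) -
          (S2 b c * S (-b) c + S1 b c * S1 (-b) c))) c := by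
    exact (hasDerivAt_id c).mul
      (((hasDerivAt_S1 hb' c).mul (hasDerivAt_S hb1 c)).sub
        ((hasDerivAt_S1 hb1 c).mul (hasDerivAt_S hb' c)))
  exact h1.add h2

lemma PD_mul_c (hb1 : -1 < b) (hb2 : b < 1) (c : ℝ) : c * PD b c = 0 := by
  have hb' : -1 < -b := by linarith
  have o1 := ode_S hb1 c
  have o2 := ode_S hb' c
  rw [PD]
  linear_combination S b c * o2 - S (-b) c * o1

lemma S_even (c : ℝ) : S b (-c) = S b c := by
  apply tsum_congr
  intro k
  rw [tt, tt, (even_two_mul k).neg_pow]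

lemma S1_odd (c : ℝ) : S1 b (-c) = -S1 b c := by
  rw [S1, S1, ← tsum_neg]
  apply tsum_congr
  intro k
  match k with
  | 0 => simp [td]
  | (k+1) =>
    rw [td, td]
    have hodd : Odd (2*(k+1)-1) := ⟨k, by omega⟩
    rw [hodd.neg_pow]
    ring

lemma P_even (c : ℝ) : P b (-c) = P b c := by
  rw [P, P, S_even, S_even, S1_odd, S1_odd]
  ring

lemma P_const (hb1 : -1 < b) (hb2 : b < 1) (c : ℝ) : P b c = P b 0 := by
  have hdiff : Differentiable ℝ (P b) := fun x => (hasDerivAt_P hb1 hb2 x).differentiableAt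
  have hzero : ∀ x, deriv (P b) x = 0 := by
    intro x
    rcases eq_or_ne x 0 with rfl | hx
    · have hfun : (fun y : ℝ => P b (-y)) = P b := funext fun y => P_even y
      have hneg : deriv (fun y : ℝ => P b (-y)) 0 = -deriv (P b) (-0) := deriv_comp_neg (P b) 0
      rw [hfun, neg_zero] at hneg
      linarith
    · rw [(hasDerivAt_P hb1 hb2 x).deriv]
      have := PD_mul_c hb1 hb2 x
      exact (mul_eq_zero.mp this).resolve_left hx
  exact is_const_of_deriv_eq_zero hdiff hzero c 0

lemma P_zero_pos (hb1 : -1 < b) (hb2 : b < 0) : 0 < P b 0 := by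
  have hb' : -1 < -b := by linarith
  rw [P, S_zero hb1, S_zero hb']
  have h1 : 0 < Real.Gamma (b+1) := by
    have := Gam_pos hb1 0; simpa using this
  have h2 : 0 < Real.Gamma (-b+1) := by
    have := Gam_pos hb' 0; simpa using this
  have : (-2*b) * (1 / Real.Gamma (-b + 1)) * (1 / Real.Gamma (b + 1)) + 0 *
      (S1 (-b) 0 * (1 / Real.Gamma (b + 1)) - S1 b 0 * (1 / Real.Gamma (-b + 1)))
      = (-2*b) * (1 / Real.Gamma (-b + 1)) * (1 / Real.Gamma (b + 1)) := by ring
  rw [this]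
  have hbpos : 0 < -2*b := by linarith
  positivity

lemma rho_hasDeriv (hb1 : -1 < b) (hb2 : b < 0) {c : ℝ} (hc : 0 < c) :
    HasDerivAt (fun y => (y ^ (-b) * S (-b) y) / (y ^ b * S b y))
      (P b 0 / (c * (c ^ b * S b c)^2)) c := by
  have hb' : -1 < -b := by linarith
  have hb2' : b < 1 := by linarith
  have hcne : c ≠ 0 := hc.ne'
  have hu : HasDerivAt (fun y : ℝ => y ^ b * S b y)
      (b * c^(b-1) * S b c + c^b * S1 b c) c :=
    (Real.hasDerivAt_rpow_const (Or.inl hcne)).mul (hasDerivAt_S hb1 c)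
  have hv : HasDerivAt (fun y : ℝ => y ^ (-b) * S (-b) y)
      ((-b) * c^(-b-1) * S (-b) c + c^(-b) * S1 (-b) c) c :=
    (Real.hasDerivAt_rpow_const (Or.inl hcne)).mul (hasDerivAt_S hb' c)
  have hune : c ^ b * S b c ≠ 0 := by
    have := S_pos hb1 c
    have := Real.rpow_pos_of_pos hc b
    positivity
  have hd := hv.div hu hune
  refine hd.congr_deriv ?_
  have e1 : c^(-b) * c^b = 1 := by
    rw [← Real.rpow_add hc]; simp
  have e2 : c^(-b-1) * c^b = c⁻¹ := by
    rw [← Real.rpow_add hc]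
    rw [show -b-1+b = -1 by ring, Real.rpow_neg_one]
  have e3 : c^(b-1) * c^(-b) = c⁻¹ := by
    rw [← Real.rpow_add hc]
    rw [show b-1+-b = -1 by ring, Real.rpow_neg_one]
  have hnum : ((-b) * c^(-b-1) * S (-b) c + c^(-b) * S1 (-b) c) * (c ^ b * S b c)
      - (c ^ (-b) * S (-b) c) * (b * c^(b-1) * S b c + c^b * S1 b c) = P b c / c := by
    rw [eq_div_iff hcne, P]
    calc (((-b) * c^(-b-1) * S (-b) c + c^(-b) * S1 (-b) c) * (c ^ b * S b c)
        - (c ^ (-b) * S (-b) c) * (b * c^(b-1) * S b c + c^b * S1 b c)) * c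
        = ((-b) * (c^(-b-1) * c^b) * (S (-b) c * S b c)
            - b * (c^(b-1) * c^(-b)) * (S (-b) c * S b c)) * c
          + ((c^(-b) * c^b) * (S1 (-b) c * S b c) - (c^(-b) * c^b) * (S1 b c * S (-b) c)) * c := by
          ring
      _ = ((-b) * c⁻¹ * (S (-b) c * S b c) - b * c⁻¹ * (S (-b) c * S b c)) * c
          + (1 * (S1 (-b) c * S b c) - 1 * (S1 b c * S (-b) c)) * c := by rw [e1, e2, e3]
      _ = (-2*b) * (c⁻¹ * c) * (S (-b) c * S b c)
          + c * (S1 (-b) c * S b c - S1 b c * S (-b) c) := by ring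
      _ = (-2*b) * S (-b) c * S b c + c * (S1 (-b) c * S b c - S1 b c * S (-b) c) := by
          rw [inv_mul_cancel₀ hcne]; ring
  rw [hnum, P_const hb1 hb2' c, div_div]
lemma rho_mono (hb1 : -1 < b) (hb2 : b < 0) :
    StrictMonoOn (fun c => (c ^ (-b) * S (-b) c) / (c ^ b * S b c)) (Set.Ioi (0:ℝ)) := by
  apply strictMonoOn_of_deriv_pos (convex_Ioi 0)
  · intro c hc
    exact (rho_hasDeriv hb1 hb2 hc).continuousAt.continuousWithinAt
  · intro c hc
    rw [interior_Ioi] at hc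
    rw [(rho_hasDeriv hb1 hb2 hc).deriv]
    have h1 := P_zero_pos hb1 hb2
    have h2 := S_pos hb1 c
    have h3 := Real.rpow_pos_of_pos hc b
    exact div_pos h1 (mul_pos hc (pow_pos (mul_pos h3 h2) 2))

lemma Gamma_interp {x y θ : ℝ} (hx : 0 < x) (hy : 0 < y) (h0 : 0 ≤ θ) (h1 : θ ≤ 1) :
    Real.Gamma (θ*x + (1-θ)*y) ≤ Real.Gamma x ^ θ * Real.Gamma y ^ (1-θ) := by
  have hmem : θ*x + (1-θ)*y ∈ Ioi (0:ℝ) := by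
    rcases eq_or_lt_of_le h0 with rfl | hθ
    · simpa using hy
    · rcases eq_or_lt_of_le h1 with rfl | hθ1
      · simpa using hx
      · have : 0 < θ*x := mul_pos hθ hx
        have : 0 < (1-θ)*y := mul_pos (by linarith) hy
        simp only [mem_Ioi]; linarith
  have hconv := Real.convexOn_log_Gamma.2 (mem_Ioi.mpr hx) (mem_Ioi.mpr hy) h0
    (by linarith : (0:ℝ) ≤ 1 - θ) (by ring)
  simp only [smul_eq_mul, Function.comp_apply] at hconv
  have hGx := Real.Gamma_pos_of_pos hx
  have hGy := Real.Gamma_pos_of_pos hy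
  have hGm := Real.Gamma_pos_of_pos (mem_Ioi.mp hmem)
  calc Real.Gamma (θ*x + (1-θ)*y) = Real.exp (Real.log (Real.Gamma (θ*x + (1-θ)*y))) :=
        (Real.exp_log hGm).symm
    _ ≤ Real.exp (θ * Real.log (Real.Gamma x) + (1-θ) * Real.log (Real.Gamma y)) :=
        Real.exp_le_exp.mpr hconv
    _ = Real.Gamma x ^ θ * Real.Gamma y ^ (1-θ) := by
        rw [Real.exp_add, Real.rpow_def_of_pos hGx, Real.rpow_def_of_pos hGy,
          mul_comm θ _, mul_comm (1-θ) _]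

lemma Gamma_ratio {b : ℝ} (hb1 : -1 < b) (hb2 : b < 0) {k : ℕ} (hk : 1 ≤ k) :
    Real.Gamma ((k:ℝ) + b + 1) ≤ (k:ℝ) ^ (2*b) * Real.Gamma ((k:ℝ) + (-b) + 1) := by
  have hkR : (1:ℝ) ≤ (k:ℝ) := by exact_mod_cast hk
  have hkpos : (0:ℝ) < k := by linarith
  set A := Real.Gamma ((k:ℝ) + b + 1) with hA
  set B := Real.Gamma ((k:ℝ) + (-b) + 1) with hB
  set G := Real.Gamma ((k:ℝ)) with hG
  set F := Real.Gamma ((k:ℝ) + 1) with hF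
  have hGpos : 0 < G := Real.Gamma_pos_of_pos hkpos
  have hFpos : 0 < F := Real.Gamma_pos_of_pos (by linarith)
  have hApos : 0 < A := Real.Gamma_pos_of_pos (by linarith)
  have hBpos : 0 < B := Real.Gamma_pos_of_pos (by linarith)
  have hFG : F = (k:ℝ) * G := by
    rw [hF, hG, Real.Gamma_add_one (by positivity)]
  -- step i : A ≤ F * k^b
  have stepi : A ≤ F * (k:ℝ)^b := by
    have h := Gamma_interp hkpos (show (0:ℝ) < (k:ℝ)+1 by linarith)
      (show (0:ℝ) ≤ -b by linarith) (show -b ≤ 1 by linarith)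
    have harg : (-b)*(k:ℝ) + (1-(-b))*((k:ℝ)+1) = (k:ℝ) + b + 1 := by ring
    rw [harg] at h
    have : G ^ (-b) * F ^ (1-(-b)) = F * (k:ℝ)^b := by
      rw [show (1-(-b)) = 1 + b by ring, Real.rpow_add hFpos, Real.rpow_one, hFG,
        Real.mul_rpow (le_of_lt hkpos) hGpos.le, Real.rpow_neg hGpos.le]
      field_simp
    rw [hA, ← this]
    exact h
  -- step ii : F^2 ≤ B * A
  have stepii : F^2 ≤ B * A := by
    have h := Gamma_interp (show (0:ℝ) < (k:ℝ)+(-b)+1 by linarith)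
      (show (0:ℝ) < (k:ℝ)+b+1 by linarith) (show (0:ℝ) ≤ 1/2 by norm_num)
      (show (1:ℝ)/2 ≤ 1 by norm_num)
    have harg : (1/2)*((k:ℝ)+(-b)+1) + (1-1/2)*((k:ℝ)+b+1) = (k:ℝ) + 1 := by ring
    rw [harg] at h
    have hsq : (B ^ ((1:ℝ)/2) * A ^ (1-(1:ℝ)/2))^2 = B * A := by
      rw [show (1-(1:ℝ)/2) = 1/2 by norm_num, mul_pow, ← Real.rpow_natCast (B ^ ((1:ℝ)/2)) 2,
        ← Real.rpow_natCast (A ^ ((1:ℝ)/2)) 2, ← Real.rpow_mul hBpos.le, ← Real.rpow_mul hApos.le]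
      norm_num
    calc F^2 ≤ (B ^ ((1:ℝ)/2) * A ^ (1-(1:ℝ)/2))^2 := by
          apply pow_le_pow_left₀ hFpos.le
          exact h
      _ = B * A := hsq
  -- combine : F ≤ B * k^b
  have step3 : F ≤ B * (k:ℝ)^b := by
    have h := stepii.trans (mul_le_mul_of_nonneg_left stepi hBpos.le)
    -- F^2 ≤ B * (F * k^b)
    have hkb : (0:ℝ) < (k:ℝ)^b := Real.rpow_pos_of_pos hkpos b
    nlinarith [hFpos, hBpos]
  calc A ≤ F * (k:ℝ)^b := stepi
    _ ≤ (B * (k:ℝ)^b) * (k:ℝ)^b := by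
        apply mul_le_mul_of_nonneg_right step3 (Real.rpow_pos_of_pos hkpos b).le
    _ = (k:ℝ)^(2*b) * B := by
        rw [show (2*b) = b + b by ring, Real.rpow_add hkpos]
        ring

lemma tt_succ (hb : -1 < b) (c : ℝ) (k : ℕ) :
    tt b c (k+1) * (((k:ℝ)+1)*((k:ℝ)+b+1)) = tt b c k * c^2 := by
  rw [tt, tt, Gam_succ hb, Nat.factorial_succ]
  have hG0 : Real.Gamma ((k:ℝ) + b + 1) ≠ 0 := ne_of_gt (Gam_pos hb k)
  have hA0 : (k:ℝ) + b + 1 ≠ 0 := ne_of_gt (Gam_arg_pos hb k)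
  have hf0 : (k.factorial : ℝ) ≠ 0 := by
    exact_mod_cast k.factorial_pos.ne'
  have he : 2*(k+1) = 2*k + 2 := by omega
  rw [he]
  push_cast
  field_simp
  ring

lemma tt_incr (hb : -1 < b) {c : ℝ} (k : ℕ) (h : ((k:ℝ)+1)*((k:ℝ)+b+1) ≤ c^2) :
    tt b c k ≤ tt b c (k+1) := by
  have hD : 0 < ((k:ℝ)+1)*((k:ℝ)+b+1) := by
    have := Gam_arg_pos hb k; positivity
  have h1 : tt b c k * (((k:ℝ)+1)*((k:ℝ)+b+1)) ≤ tt b c (k+1) * (((k:ℝ)+1)*((k:ℝ)+b+1)) := by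
    rw [tt_succ hb c k]
    exact mul_le_mul_of_nonneg_left h (tt_nonneg hb c k)
  exact le_of_mul_le_mul_right h1 hD

lemma tt_ratio (hb1 : -1 < b) (hb2 : b < 0) (c : ℝ) {j : ℕ} (hj : 1 ≤ j) :
    tt (-b) c j ≤ (j:ℝ)^(2*b) * tt b c j := by
  have hb' : -1 < -b := by linarith
  have hG1 := Gam_pos hb' j
  have hG2 := Gam_pos hb1 j
  have hjpos : (0:ℝ) < j := by exact_mod_cast hj
  have hjb : (0:ℝ) < (j:ℝ)^(2*b) := Real.rpow_pos_of_pos hjpos _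
  have hcp : (0:ℝ) ≤ c^(2*j) := by rw [pow_mul]; positivity
  have hfac : (0:ℝ) < (j.factorial : ℝ) := by exact_mod_cast j.factorial_pos
  rw [tt, tt, ← mul_div_assoc, div_le_div_iff₀ (by positivity) (by positivity)]
  have hGr := Gamma_ratio hb1 hb2 hj
  calc c ^ (2*j) * ((j.factorial : ℝ) * Real.Gamma ((j:ℝ) + b + 1))
      ≤ c ^ (2*j) * ((j.factorial : ℝ) * ((j:ℝ)^(2*b) * Real.Gamma ((j:ℝ) + (-b) + 1))) := by
        apply mul_le_mul_of_nonneg_left _ hcp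
        exact mul_le_mul_of_nonneg_left hGr hfac.le
    _ = (j:ℝ)^(2*b) * c ^ (2*j) * ((j.factorial:ℝ) * Real.Gamma ((j:ℝ) + (-b) + 1)) := by ring

lemma geo_bound {r : ℝ} (h0 : 0 ≤ r) (h1 : r < 1) (n : ℕ) :
    ∑ i ∈ Finset.range n, r^i ≤ (1-r)⁻¹ := by
  rw [geom_sum_eq (ne_of_lt h1) n, div_le_iff_of_neg (by linarith)]
  have hrn : 0 ≤ r^n := pow_nonneg h0 n
  have hcancel : (1-r) * (1-r)⁻¹ = 1 := mul_inv_cancel₀ (by linarith)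
  nlinarith


lemma head_geom_lem {b' : ℝ} (hb' : -1 < b') (hb'1 : b' < 1) {c r : ℝ} (hc2 : (0:ℝ) < c^2)
    (hr0 : 0 ≤ r) (m : ℕ) (hrdef : ((m:ℝ)*((m:ℝ)+1)) ≤ r * c^2) :
    ∀ j k, k + j = m → tt b' c k ≤ r^j * tt b' c m := by
  intro j
  induction j with
  | zero =>
    intro k hk
    have hkm : k = m := by omega
    rw [hkm, pow_zero, one_mul]
  | succ n ih =>
    intro k hk
    have hk1 : (k+1) + n = m := by omega
    have step : tt b' c k ≤ r * tt b' c (k+1) := by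
      have hts := tt_succ hb' c k
      have hkm : ((k:ℝ)+1) ≤ (m:ℝ) := by
        have h9 : k + 1 ≤ m := by omega
        exact_mod_cast h9
      have hkm2 : ((k:ℝ)+b'+1) ≤ (m:ℝ)+1 := by linarith only [hb'1, hkm]
      have hknn : (0:ℝ) ≤ (k:ℝ)+b'+1 := (Gam_arg_pos hb' k).le
      have hDm : ((k:ℝ)+1)*((k:ℝ)+b'+1) ≤ (m:ℝ)*((m:ℝ)+1) :=
        mul_le_mul hkm hkm2 hknn (by linarith only [hkm, hknn, hkm2])
      have hcc : tt b' c k * c^2 ≤ tt b' c (k+1) * (r * c^2) := by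
        rw [← hts]
        exact mul_le_mul_of_nonneg_left (hDm.trans hrdef) (tt_nonneg hb' c (k+1))
      have h2 : tt b' c k * c^2 ≤ (r * tt b' c (k+1)) * c^2 := by
        calc tt b' c k * c^2 ≤ tt b' c (k+1) * (r * c^2) := hcc
          _ = (r * tt b' c (k+1)) * c^2 := by ring
      exact le_of_mul_le_mul_right h2 hc2
    calc tt b' c k ≤ r * tt b' c (k+1) := step
      _ ≤ r * (r^n * tt b' c m) := mul_le_mul_of_nonneg_left (ih (k+1) hk1) hr0
      _ = r^(n+1) * tt b' c m := by ring

lemma head_sum_lem {b' : ℝ} (hb' : -1 < b') (hb'1 : b' < 1) {c r : ℝ} (hc2 : (0:ℝ) < c^2)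
    (hr0 : 0 ≤ r) (hr1 : r < 1) (m : ℕ) (hrdef : ((m:ℝ)*((m:ℝ)+1)) ≤ r * c^2) :
    ∑ k ∈ Finset.range m, tt b' c k ≤ (1-r)⁻¹ * tt b' c m := by
  have h1 : ∀ k ∈ Finset.range m, tt b' c k ≤ r^(m-k) * tt b' c m := by
    intro k hk
    exact head_geom_lem hb' hb'1 hc2 hr0 m hrdef (m-k) k
      (by have := Finset.mem_range.mp hk; omega)
  have hgeo : ∑ k ∈ Finset.range m, r^(m-k) ≤ (1-r)⁻¹ := by
    have hrefl : ∑ k ∈ Finset.range m, r^(m-k) = ∑ j ∈ Finset.range m, r^(j+1) := by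
      rw [← Finset.sum_range_reflect (fun j => r^(j+1)) m]
      apply Finset.sum_congr rfl
      intro k hk
      have hk' : k < m := Finset.mem_range.mp hk
      congr 1
      omega
    rw [hrefl]
    have h2 : ∀ j ∈ Finset.range m, r^(j+1) ≤ r^j := by
      intro j _
      rw [pow_succ]
      nlinarith [pow_nonneg hr0 j]
    exact (Finset.sum_le_sum h2).trans (geo_bound hr0 hr1 m)
  calc ∑ k ∈ Finset.range m, tt b' c k
      ≤ ∑ k ∈ Finset.range m, r^(m-k) * tt b' c m := Finset.sum_le_sum h1
    _ = (∑ k ∈ Finset.range m, r^(m-k)) * tt b' c m := by rw [Finset.sum_mul]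
    _ ≤ (1-r)⁻¹ * tt b' c m :=
        mul_le_mul_of_nonneg_right hgeo (tt_nonneg hb' c m)

lemma tail_lem (hb1 : -1 < b) (hb2 : b < 0) (c : ℝ) {m : ℕ} (hm1 : 1 ≤ m) :
    ∑' k, tt (-b) c (k+m) ≤ (m:ℝ)^(2*b) * S b c := by
  have hb' : -1 < -b := by linarith
  have hmR1 : (1:ℝ) ≤ (m:ℝ) := by exact_mod_cast hm1
  have hsump : Summable (fun k => tt (-b) c (k+m)) :=
    (summable_nat_add_iff m).2 (summable_tt hb' c)
  have hsumb : Summable (fun k => tt b c (k+m)) :=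
    (summable_nat_add_iff m).2 (summable_tt hb1 c)
  have h1 : ∀ k, tt (-b) c (k+m) ≤ (m:ℝ)^(2*b) * tt b c (k+m) := by
    intro k
    have hj : 1 ≤ k + m := by omega
    have h2 := tt_ratio hb1 hb2 c hj
    have h3 : ((k+m : ℕ):ℝ)^(2*b) ≤ (m:ℝ)^(2*b) := by
      apply Real.rpow_le_rpow_of_nonpos (by linarith)
        (by exact_mod_cast Nat.le_add_left m k) (by linarith)
    exact h2.trans (mul_le_mul_of_nonneg_right h3 (tt_nonneg hb1 c (k+m)))
  have h2 := Summable.tsum_le_tsum h1 hsump (hsumb.mul_left _)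
  rw [tsum_mul_left] at h2
  refine h2.trans (mul_le_mul_of_nonneg_left ?_ (Real.rpow_nonneg (by linarith) _))
  have h3 := Summable.sum_add_tsum_nat_add (f := tt b c) m (summable_tt hb1 c)
  have h4 : 0 ≤ ∑ i ∈ Finset.range m, tt b c i :=
    Finset.sum_nonneg fun i _ => tt_nonneg hb1 c i
  rw [S]
  linarith only [h3, h4]

lemma bulk_lem (hb1 : -1 < b) (hbu : b < 1) {c : ℝ} (m p : ℕ) (hp : 2 ≤ p)
    (hcbig : (m:ℝ) + (p:ℝ) ≤ c) (hc0 : 0 ≤ c) :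
    ((p:ℝ)-1) * tt b c m ≤ S b c := by
  have incr' : ∀ k, k + 2 ≤ m + p → tt b c k ≤ tt b c (k+1) := by
    intro k hk
    apply tt_incr hb1
    have hkc : ((k:ℝ)+2) ≤ c := by
      have h9 : ((k+2 : ℕ):ℝ) ≤ ((m+p : ℕ):ℝ) := by exact_mod_cast hk
      push_cast at h9
      linarith only [h9, hcbig]
    have hk0 : (0:ℝ) ≤ (k:ℝ) := Nat.cast_nonneg k
    have e1 : ((k:ℝ)+1)*((k:ℝ)+b+1) ≤ ((k:ℝ)+2)*((k:ℝ)+2) := by nlinarith [hk0, hbu]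
    have e2 : ((k:ℝ)+2)*((k:ℝ)+2) ≤ c*c :=
      mul_le_mul hkc hkc (by linarith only [hk0]) hc0
    nlinarith [e1, e2]
  have mono' : ∀ n, m ≤ n → n ≤ m + (p - 2) → tt b c m ≤ tt b c n := by
    intro n hmn
    induction n, hmn using Nat.le_induction with
    | base => intro _; exact le_refl _
    | succ n hn ih =>
      intro hub
      have h1 : n ≤ m + (p-2) := by omega
      refine (ih h1).trans (incr' n ?_)
      omega
  have hsub : ∀ k ∈ Finset.Ico m (m + (p-1)), tt b c m ≤ tt b c k := by
    intro k hk
    have h9 := Finset.mem_Ico.mp hk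
    exact mono' k h9.1 (by omega)
  have hcard : (Finset.Ico m (m + (p-1))).card = p - 1 := by
    rw [Nat.card_Ico]; omega
  have h5 : ((p-1 : ℕ):ℝ) * tt b c m ≤ ∑ k ∈ Finset.Ico m (m + (p-1)), tt b c k := by
    have h9 := Finset.card_nsmul_le_sum (Finset.Ico m (m + (p-1))) (tt b c) (tt b c m) hsub
    rwa [hcard, nsmul_eq_mul] at h9
  have h6 : ((p-1 : ℕ):ℝ) = (p:ℝ)-1 := by
    push_cast [Nat.cast_sub (by omega : 1 ≤ p)]; ring
  rw [← h6]
  refine h5.trans ?_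
  exact Summable.sum_le_tsum _ (fun i _ => tt_nonneg hb1 c i) (summable_tt hb1 c)

-- MAIN
lemma main_est (hb1 : -1 < b) (hb2 : b < 0) (d p : ℕ) (hd : 2 ≤ d) (hp : 2 ≤ p) :
    S (-b) ((d:ℝ)*(p:ℝ)) ≤
      ((((d-1)*p : ℕ)):ℝ)^(2*b) * (1 + 2*(d:ℝ)/((p:ℝ)-1)) * S b ((d:ℝ)*(p:ℝ)) := by
  have hb' : -1 < -b := by linarith
  have hb'1 : -b < 1 := by linarith
  obtain ⟨c, hc⟩ : ∃ c : ℝ, c = (d:ℝ)*(p:ℝ) := ⟨_, rfl⟩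
  obtain ⟨m, hm⟩ : ∃ m : ℕ, m = (d-1)*p := ⟨_, rfl⟩
  rw [← hc, ← hm]
  have hdR : (2:ℝ) ≤ d := by exact_mod_cast hd
  have hpR : (2:ℝ) ≤ p := by exact_mod_cast hp
  have hmcast : ((m:ℕ):ℝ) = ((d:ℝ)-1)*(p:ℝ) := by
    rw [hm]
    push_cast [Nat.cast_sub (by omega : 1 ≤ d)]
    ring
  have hm1 : 1 ≤ m := by
    rw [hm]
    have h1 : 1 ≤ d - 1 := by omega
    calc 1 = 1*1 := by ring
      _ ≤ (d-1)*p := Nat.mul_le_mul h1 (by omega)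
  have hmp : (m:ℝ) + (p:ℝ) = c := by rw [hmcast, hc]; ring
  have hmR1 : (1:ℝ) ≤ (m:ℝ) := by exact_mod_cast hm1
  have hcpos : (0:ℝ) < c := by rw [hc]; positivity
  have hc2 : (0:ℝ) < c^2 := by positivity
  obtain ⟨r, hr⟩ : ∃ r : ℝ, r = ((m:ℝ)*((m:ℝ)+1))/c^2 := ⟨_, rfl⟩
  have hr0 : 0 ≤ r := by
    rw [hr]
    have h9 : (0:ℝ) ≤ (m:ℝ) := Nat.cast_nonneg m
    positivity
  have hs : (0:ℝ) < 1/(2*(d:ℝ)) := by positivity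
  have hm1c : ((m:ℝ)+1) ≤ (1 - 1/(2*(d:ℝ)))*c := by
    have key : (1 - 1/(2*(d:ℝ)))*((d:ℝ)*(p:ℝ)) = (d:ℝ)*(p:ℝ) - (p:ℝ)/2 := by
      field_simp
    have e : ((d:ℝ)-1)*(p:ℝ) = (d:ℝ)*(p:ℝ) - (p:ℝ) := by ring
    rw [hmcast, hc, key, e]
    linarith only [hpR]
  have hrle : r ≤ 1 - 1/(2*(d:ℝ)) := by
    have h1 : (m:ℝ)*((m:ℝ)+1) ≤ ((m:ℝ)+1)^2 := by nlinarith [hmR1]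
    have h2 : ((m:ℝ)+1)^2 ≤ ((1 - 1/(2*(d:ℝ)))*c)^2 :=
      pow_le_pow_left₀ (by linarith only [hmR1]) hm1c 2
    have hsle : 1/(2*(d:ℝ)) ≤ 1/4 := by
      rw [div_le_div_iff₀ (by positivity) (by norm_num)]
      linarith only [hdR]
    have hs0 : 0 ≤ 1 - 1/(2*(d:ℝ)) := by linarith only [hsle]
    have h4 : (1 - 1/(2*(d:ℝ)))^2 ≤ 1 - 1/(2*(d:ℝ)) := by
      nlinarith [mul_nonneg hs0 hs.le]
    have e5 : ((1 - 1/(2*(d:ℝ)))*c)^2 = (1 - 1/(2*(d:ℝ)))^2 * c^2 := by ring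
    have e6 : (1 - 1/(2*(d:ℝ)))^2 * c^2 ≤ (1 - 1/(2*(d:ℝ))) * c^2 :=
      mul_le_mul_of_nonneg_right h4 hc2.le
    rw [hr, div_le_iff₀ hc2]
    linarith only [h1, h2, e5, e6]
  have hrlt1 : r < 1 := by linarith only [hrle, hs]
  have h1r : 1/(2*(d:ℝ)) ≤ 1 - r := by linarith only [hrle]
  have hrdef : ((m:ℝ)*((m:ℝ)+1)) ≤ r * c^2 := by
    rw [hr, div_mul_cancel₀ _ (ne_of_gt hc2)]
  have head_sum : ∑ k ∈ Finset.range m, tt (-b) c k ≤ (2*(d:ℝ)) * tt (-b) c m := by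
    have h9 := head_sum_lem hb' hb'1 hc2 hr0 hrlt1 m hrdef
    have hinv : (1-r)⁻¹ ≤ 2*(d:ℝ) := by
      have h3 := inv_anti₀ hs h1r
      rwa [one_div, inv_inv] at h3
    refine h9.trans (mul_le_mul_of_nonneg_right hinv (tt_nonneg hb' c m))
  have tail := tail_lem hb1 hb2 c hm1
  have bulk := bulk_lem hb1 (by linarith only [hb2]) m p hp (le_of_eq hmp) hcpos.le
  have hsplit := Summable.sum_add_tsum_nat_add (f := tt (-b) c) m (summable_tt hb' c)
  have httm : tt (-b) c m ≤ (m:ℝ)^(2*b) * tt b c m := tt_ratio hb1 hb2 c hm1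
  have httmS : tt b c m ≤ S b c / ((p:ℝ)-1) := by
    rw [le_div_iff₀ (by linarith only [hpR])]
    calc tt b c m * ((p:ℝ)-1) = ((p:ℝ)-1) * tt b c m := by ring
      _ ≤ S b c := bulk
  have hmb : (0:ℝ) ≤ (m:ℝ)^(2*b) := Real.rpow_nonneg (by linarith only [hmR1]) _
  have httbm : 0 ≤ tt b c m := tt_nonneg hb1 c m
  calc S (-b) c = ∑ k ∈ Finset.range m, tt (-b) c k + ∑' k, tt (-b) c (k+m) := by
        rw [S, ← hsplit]
    _ ≤ (2*(d:ℝ)) * tt (-b) c m + (m:ℝ)^(2*b) * S b c := add_le_add head_sum tail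
    _ ≤ (2*(d:ℝ)) * ((m:ℝ)^(2*b) * tt b c m) + (m:ℝ)^(2*b) * S b c := by
        apply add_le_add_left
        exact mul_le_mul_of_nonneg_left httm (by linarith only [hdR])
    _ ≤ (2*(d:ℝ)) * ((m:ℝ)^(2*b) * (S b c / ((p:ℝ)-1))) + (m:ℝ)^(2*b) * S b c := by
        apply add_le_add_left
        apply mul_le_mul_of_nonneg_left _ (by linarith only [hdR])
        exact mul_le_mul_of_nonneg_left httmS hmb
    _ = (m:ℝ)^(2*b) * (1 + 2*(d:ℝ)/((p:ℝ)-1)) * S b c := by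
        have hp1 : (p:ℝ)-1 ≠ 0 := by linarith only [hpR]
        field_simp
        ring

lemma rho_le_one (hb1 : -1 < b) (hb2 : b < 0) {c₀ : ℝ} (hc₀ : 0 < c₀) :
    (c₀ ^ (-b) * S (-b) c₀) / (c₀ ^ b * S b c₀) ≤ 1 := by
  set rho : ℝ → ℝ := fun c => (c ^ (-b) * S (-b) c) / (c ^ b * S b c) with hrho
  have hmono : MonotoneOn rho (Set.Ioi (0:ℝ)) := (rho_mono hb1 hb2).monotoneOn
  -- Step 1 : bound at integer points
  have step1 : ∀ d : ℕ, 2 ≤ d → rho c₀ ≤ (((d:ℝ)-1)/(d:ℝ))^(2*b) := by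
    intro d hd
    have hdR : (2:ℝ) ≤ (d:ℝ) := by exact_mod_cast hd
    have key : ∀ p : ℕ, 2 ≤ p → c₀ ≤ (d:ℝ)*(p:ℝ) →
        rho c₀ ≤ (((d:ℝ)-1)/(d:ℝ))^(2*b) * (1 + 2*(d:ℝ)/((p:ℝ)-1)) := by
      intro p hp hcp
      have hpR : (2:ℝ) ≤ (p:ℝ) := by exact_mod_cast hp
      have hdppos : (0:ℝ) < (d:ℝ)*(p:ℝ) := by positivity
      have h1 : rho c₀ ≤ rho ((d:ℝ)*(p:ℝ)) :=
        hmono (Set.mem_Ioi.mpr hc₀) (Set.mem_Ioi.mpr hdppos) hcp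
      refine h1.trans ?_
      -- bound rho at d*p
      have hS := S_pos hb1 ((d:ℝ)*(p:ℝ))
      have hrp : (0:ℝ) < ((d:ℝ)*(p:ℝ)) ^ b := Real.rpow_pos_of_pos hdppos b
      have hden : (0:ℝ) < ((d:ℝ)*(p:ℝ)) ^ b * S b ((d:ℝ)*(p:ℝ)) := mul_pos hrp hS
      rw [hrho]
      simp only []
      rw [div_le_iff₀ hden]
      have hest := main_est hb1 hb2 d p hd hp
      have hm : (((d-1)*p : ℕ):ℝ) = ((d:ℝ)-1)*(p:ℝ) := by
        push_cast [Nat.cast_sub (by omega : 1 ≤ d)]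
        ring
      rw [hm] at hest
      have hrpow : (((d:ℝ)-1)*(p:ℝ))^(2*b)
          = (((d:ℝ)-1)/(d:ℝ))^(2*b) * ((d:ℝ)*(p:ℝ))^(2*b) := by
        rw [← Real.mul_rpow (div_nonneg (by linarith) (by positivity)) (by positivity)]
        congr 1
        field_simp
      have hsplit : ((d:ℝ)*(p:ℝ))^(2*b) = ((d:ℝ)*(p:ℝ))^b * ((d:ℝ)*(p:ℝ))^b := by
        rw [← Real.rpow_add hdppos]
        congr 1
        ring
      have hmulneg : (0:ℝ) ≤ ((d:ℝ)*(p:ℝ)) ^ (-b) := (Real.rpow_pos_of_pos hdppos _).le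
      calc ((d:ℝ)*(p:ℝ)) ^ (-b) * S (-b) ((d:ℝ)*(p:ℝ))
          ≤ ((d:ℝ)*(p:ℝ)) ^ (-b) *
            ((((d:ℝ)-1)*(p:ℝ))^(2*b) * (1 + 2*(d:ℝ)/((p:ℝ)-1)) * S b ((d:ℝ)*(p:ℝ))) :=
            mul_le_mul_of_nonneg_left hest hmulneg
        _ = (((d:ℝ)-1)/(d:ℝ))^(2*b) * (1 + 2*(d:ℝ)/((p:ℝ)-1)) *
              (((d:ℝ)*(p:ℝ)) ^ (-b) * (((d:ℝ)*(p:ℝ))^b * ((d:ℝ)*(p:ℝ))^b)) *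
              S b ((d:ℝ)*(p:ℝ)) := by
            rw [hrpow, hsplit]; ring
        _ = (((d:ℝ)-1)/(d:ℝ))^(2*b) * (1 + 2*(d:ℝ)/((p:ℝ)-1)) *
              (((d:ℝ)*(p:ℝ))^b) * S b ((d:ℝ)*(p:ℝ)) := by
            rw [← mul_assoc (((d:ℝ)*(p:ℝ)) ^ (-b)), ← Real.rpow_add hdppos]
            norm_num
        _ = (((d:ℝ)-1)/(d:ℝ))^(2*b) * (1 + 2*(d:ℝ)/((p:ℝ)-1)) *
              (((d:ℝ)*(p:ℝ))^b * S b ((d:ℝ)*(p:ℝ))) := by ring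
    -- limit p → ∞
    have htendp : Tendsto (fun p : ℕ => (((d:ℝ)-1)/(d:ℝ))^(2*b) * (1 + 2*(d:ℝ)/((p:ℝ)-1)))
        atTop (𝓝 ((((d:ℝ)-1)/(d:ℝ))^(2*b))) := by
      have h1 : Tendsto (fun p : ℕ => (p:ℝ)-1) atTop atTop := by
        apply tendsto_atTop_add_const_right atTop (-1 : ℝ)
        exact tendsto_natCast_atTop_atTop
      have h2 : Tendsto (fun p : ℕ => 2*(d:ℝ)/((p:ℝ)-1)) atTop (𝓝 0) :=
        Tendsto.div_atTop tendsto_const_nhds h1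
      have h3 : Tendsto (fun p : ℕ => 1 + 2*(d:ℝ)/((p:ℝ)-1)) atTop (𝓝 (1+0)) :=
        tendsto_const_nhds.add h2
      have h4 := tendsto_const_nhds.mul h3
        (f := fun _ : ℕ => (((d:ℝ)-1)/(d:ℝ))^(2*b))
      rw [show (((d:ℝ)-1)/(d:ℝ))^(2*b) * (1+0) = (((d:ℝ)-1)/(d:ℝ))^(2*b) by ring] at h4
      exact h4
    apply ge_of_tendsto htendp
    obtain ⟨N, hN⟩ := exists_nat_gt c₀
    filter_upwards [eventually_ge_atTop (max 2 N)] with p hp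
    have hp2 : 2 ≤ p := le_trans (le_max_left _ _) hp
    have hpN : N ≤ p := le_trans (le_max_right _ _) hp
    apply key p hp2
    have hpc : c₀ ≤ (p:ℝ) := by
      have : (N:ℝ) ≤ (p:ℝ) := by exact_mod_cast hpN
      linarith
    have hd1 : (1:ℝ) ≤ (d:ℝ) := by linarith
    nlinarith [hpc, hd1]
  -- limit d → ∞
  have htendd : Tendsto (fun d : ℕ => (((d:ℝ)-1)/(d:ℝ))^(2*b)) atTop (𝓝 1) := by
    have hbase : Tendsto (fun d : ℕ => ((d:ℝ)-1)/(d:ℝ)) atTop (𝓝 1) := by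
      have h1 : Tendsto (fun d : ℕ => 1 - 1/(d:ℝ)) atTop (𝓝 (1-0)) :=
        tendsto_const_nhds.sub tendsto_one_div_atTop_nhds_zero_nat
      rw [sub_zero] at h1
      apply h1.congr'
      filter_upwards [eventually_ge_atTop 1] with d hd
      have hd0 : (d:ℝ) ≠ 0 := by
        have : (1:ℝ) ≤ (d:ℝ) := by exact_mod_cast hd
        linarith
      field_simp
    have hcont : ContinuousAt (fun x : ℝ => x ^ (2*b)) 1 :=
      Real.continuousAt_rpow_const 1 (2*b) (Or.inl one_ne_zero)
    have := hcont.tendsto.comp hbase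
    rwa [Real.one_rpow] at this
  apply ge_of_tendsto htendd
  filter_upwards [eventually_ge_atTop 2] with d hd
  exact step1 d hd

lemma core_ineq (hb1 : -1 < b) (hb2 : b < 0) {c : ℝ} (hc : 0 < c) :
    c ^ (-(2*b)) * S (-b) c ≤ S b c := by
  have hb' : -1 < -b := by linarith
  have hS := S_pos hb1 c
  have hrp : (0:ℝ) < c ^ b := Real.rpow_pos_of_pos hc b
  have hden : (0:ℝ) < c ^ b * S b c := mul_pos hrp hS
  have h1 := rho_le_one hb1 hb2 hc
  rw [div_le_one hden] at h1
  have h2 : (0:ℝ) ≤ c ^ (-b) := (Real.rpow_pos_of_pos hc _).le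
  calc c ^ (-(2*b)) * S (-b) c = c ^ (-b) * (c ^ (-b) * S (-b) c) := by
        rw [show -(2*b) = -b + -b by ring, Real.rpow_add hc]
        ring
    _ ≤ c ^ (-b) * (c ^ b * S b c) := mul_le_mul_of_nonneg_left h1 h2
    _ = S b c := by
        rw [← mul_assoc, ← Real.rpow_add hc, show -b + b = (0:ℝ) by ring,
          Real.rpow_zero, one_mul]

end DegHeatAux

noncomputable section
open Real

open DegHeatAux in
lemma Fker_nonneg (a : ℝ) (ha₁ : -1 < a) (ha₂ : a < 1) (z : ℝ) : 0 ≤ Fker a z := by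
  have hb1 : -1 < (a-1)/2 := by linarith
  have hb2 : (a-1)/2 < 0 := by linarith
  have hb1' : -1 < -((a-1)/2) := by linarith
  have hsum1 : (∑' k : ℕ, (z / 4) ^ (2 * k) /
      ((Nat.factorial k : ℝ) * Real.Gamma ((k : ℝ) + (a - 1) / 2 + 1))) = S ((a-1)/2) (z/4) := rfl
  have hsum2 : (∑' k : ℕ, (z / 4) ^ (2 * k) /
      ((Nat.factorial k : ℝ) * Real.Gamma ((k : ℝ) - (a - 1) / 2 + 1))) = S (-((a-1)/2)) (z/4) := by
    apply tsum_congr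
    intro k
    rw [tt, sub_eq_add_neg]
  rw [Fker, hsum1, hsum2]
  apply mul_nonneg (Real.exp_pos _).le
  rcases le_or_gt 0 z with hz | hz
  · have h1 : 0 ≤ S ((a-1)/2) (z/4) := tsum_nonneg (tt_nonneg hb1 (z/4))
    have h2 : 0 ≤ S (-((a-1)/2)) (z/4) := tsum_nonneg (tt_nonneg hb1' (z/4))
    have h3 : 0 ≤ z / 4 * |z / 4| ^ (-a) :=
      mul_nonneg (by linarith) (Real.rpow_nonneg (abs_nonneg _) _)
    positivity
  · obtain ⟨c, hcdef⟩ : ∃ c : ℝ, c = -(z/4) := ⟨_, rfl⟩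
    have hc : 0 < c := by rw [hcdef]; linarith
    have hzc : z/4 = -c := by rw [hcdef]; ring
    have habs : |z/4| = c := by
      rw [abs_of_neg (by linarith : z/4 < 0), hcdef]
    have hSeq : ∀ b' : ℝ, S b' (z/4) = S b' c := by
      intro b'
      apply tsum_congr
      intro k
      rw [tt, tt, hzc, (even_two_mul k).neg_pow]
    have hfac : z / 4 * |z / 4| ^ (-a) = -(c ^ (-(2*((a-1)/2)))) := by
      rw [habs, hzc]
      have h4 : c * c ^ (-a) = c ^ (1 + -a) := by
        rw [Real.rpow_add hc, Real.rpow_one]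
      have h5 : (1:ℝ) + -a = -(2*((a-1)/2)) := by ring
      rw [neg_mul, h4, h5]
    rw [hSeq, hSeq, hfac]
    have hcore := core_ineq hb1 hb2 hc
    nlinarith [hcore]

/-- The degenerate heat kernel is nonnegative: `ũ(x,y,t) ≥ 0` for all `x, y ∈ ℝ`, `t > 0`. -/
theorem utilde_nonneg (a : ℝ) (ha₁ : -1 < a) (ha₂ : a < 1) (x y t : ℝ) (ht : 0 < t) :
    0 ≤ utilde a x y t := by
  unfold utilde
  have h1 : (0:ℝ) < (4 * t) ^ (-(a + 1) / 2) := Real.rpow_pos_of_pos (by linarith) _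
  have h2 : (0:ℝ) < Real.exp (-(x - y) ^ 2 / (4 * t)) := Real.exp_pos _
  exact mul_nonneg (mul_nonneg h1.le h2.le) (Fker_nonneg a ha₁ ha₂ _)
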